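/- arXiv:1609.03992 — 2 statements merged into one kernel-verified Lean document; each statement's English description precedes it below -/
import Mathlib

section
/- For every nonempty list A = [a_1,...,a_r] of integers with all a_i ≥ 2, the adjoint chain A* satisfies d(A*) = d(A), where A* = [(2)_{a_r−1}] * [(2)_{a_{r-1}−1}] * ... * [(2)_{a_1−1}]. -/
/-- The discriminant of a chain. -/
def disc : List ℤ → ℤ
  | [] => 1
  | [a] => a
  | a :: b :: l => a * disc (b :: l) - disc l

/-- The chain-gluing operation `*`. -/
def chainGlue (A B : List ℤ) : List ℤ :=
  A.dropLast ++ (A.getLastD 0 + B.headD 0 - 1) :: B.tail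

/-- The chain `[(2)_{a-1}]` of `a - 1` copies of `2`. -/
def twoChain (a : ℤ) : List ℤ := List.replicate (a - 1).toNat 2

/-- The adjoint chain `A* = [(2)_{a_r−1}] * [(2)_{a_{r-1}−1}] * ⋯ * [(2)_{a_1−1}]`. -/
def adjoint : List ℤ → List ℤ
  | [] => []
  | [a] => twoChain a
  | a :: b :: l => chainGlue (adjoint (b :: l)) (twoChain a)

lemma disc_app : ∀ (L : List ℤ), L ≠ [] → ∀ x : ℤ,
    disc (L ++ [x]) = x * disc L - disc L.dropLast
  | [a], _, x => by simp [disc]; ring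
  | a :: b :: M, _, x => by
    have key : disc (a :: b :: M ++ [x]) = a * disc ((b :: M) ++ [x]) - disc (M ++ [x]) := rfl
    have h1 := disc_app (b :: M) (by simp) x
    cases M with
    | nil => simp [disc] at *; ring
    | cons c M' =>
      have h2 := disc_app (c :: M') (by simp) x
      rw [key, h1, h2]
      have hd1 : (a :: b :: c :: M').dropLast = a :: b :: (c :: M').dropLast := rfl
      have hd2 : (b :: c :: M').dropLast = b :: (c :: M').dropLast := rfl
      rw [hd1, hd2]
      have e1 : disc (a :: b :: c :: M') = a * disc (b :: c :: M') - disc (c :: M') := rfl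
      have e2 : disc (a :: b :: (c :: M').dropLast)
          = a * disc (b :: (c :: M').dropLast) - disc ((c :: M').dropLast) := rfl
      rw [e1, e2]
      ring

lemma disc_bump (S : List ℤ) (m : ℤ) : disc (S ++ [m + 1]) = disc (S ++ [m]) + disc S := by
  cases S with
  | nil => simp [disc]
  | cons a T =>
    rw [disc_app (a :: T) (by simp), disc_app (a :: T) (by simp)]
    ring

lemma disc_append_replicate (L : List ℤ) (hL : L ≠ []) : ∀ k : ℕ,
    disc (L ++ List.replicate k 2) = ((k : ℤ) + 1) * disc L - (k : ℤ) * disc L.dropLast ∧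
    disc ((L ++ List.replicate k 2).dropLast) = (k : ℤ) * disc L - ((k : ℤ) - 1) * disc L.dropLast
  | 0 => by simp
  | (k + 1) => by
    obtain ⟨ih1, ih2⟩ := disc_append_replicate L hL k
    have hrep : List.replicate (k + 1) (2 : ℤ) = List.replicate k 2 ++ [2] :=
      List.replicate_succ' ..
    have hLk : L ++ List.replicate (k + 1) (2 : ℤ)
        = (L ++ List.replicate k 2) ++ [2] := by rw [hrep, ← List.append_assoc]
    have hne : L ++ List.replicate k (2 : ℤ) ≠ [] := by
      simp [hL]
    constructor
    · rw [hLk, disc_app _ hne, ih1, ih2]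
      push_cast; ring
    · rw [hLk, List.dropLast_concat, ih1]
      push_cast; ring

lemma disc_glue (R : List ℤ) (hR : R ≠ []) (a : ℤ) (ha : 2 ≤ a) :
    chainGlue R (twoChain a) ≠ [] ∧
    disc (chainGlue R (twoChain a)) = (a - 1) * disc R + disc R.dropLast ∧
    disc ((chainGlue R (twoChain a)).dropLast) = (a - 2) * disc R + disc R.dropLast := by
  set n : ℕ := (a - 2).toNat with hn
  have hnz : (n : ℤ) = a - 2 := Int.toNat_of_nonneg (by omega)
  have h1 : (a - 1).toNat = n + 1 := by omega
  have htc : twoChain a = 2 :: List.replicate n 2 := by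
    rw [twoChain, h1, List.replicate_succ]
  have hglue : chainGlue R (twoChain a)
      = (R.dropLast ++ [R.getLastD 0 + 1]) ++ List.replicate n 2 := by
    rw [chainGlue, htc]
    simp
    ring
  have hm : R.getLastD 0 = R.getLast hR := (List.getLastD_eq_getLast? (l := R) (a := 0)) ▸ by
    rw [List.getLast?_eq_getLast hR]; rfl
  have hRsplit : R.dropLast ++ [R.getLast hR] = R := List.dropLast_append_getLast hR
  set S := R.dropLast with hS
  have hLdisc : disc (S ++ [R.getLastD 0 + 1]) = disc R + disc S := by
    rw [hm, disc_bump, hRsplit]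
  have hLne : S ++ [R.getLastD 0 + 1] ≠ [] := by simp
  have hLdl : (S ++ [R.getLastD 0 + 1]).dropLast = S := List.dropLast_concat ..
  obtain ⟨e1, e2⟩ := disc_append_replicate (S ++ [R.getLastD 0 + 1]) hLne n
  refine ⟨by rw [hglue]; simp, ?_, ?_⟩
  · rw [hglue, e1, hLdisc, hLdl, hnz]; ring
  · rw [hglue, e2, hLdisc, hLdl, hnz]; ring

lemma disc_replicate : ∀ k : ℕ, disc (List.replicate k 2) = (k : ℤ) + 1
  | 0 => rfl
  | 1 => rfl
  | (k + 2) => by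
    have h1 := disc_replicate (k + 1)
    have h2 := disc_replicate k
    have e : disc (List.replicate (k + 2) 2)
        = 2 * disc (List.replicate (k + 1) 2) - disc (List.replicate k 2) := rfl
    rw [e, h1, h2]; push_cast; ring

lemma key : ∀ (A : List ℤ), A ≠ [] → (∀ x ∈ A, 2 ≤ x) →
    adjoint A ≠ [] ∧ disc (adjoint A) = disc A ∧
    disc ((adjoint A).dropLast) = disc A - disc A.tail
  | [a], _, h2 => by
    have ha : 2 ≤ a := h2 a (by simp)
    set n : ℕ := (a - 2).toNat with hn
    have hnz : (n : ℤ) = a - 2 := Int.toNat_of_nonneg (by omega)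
    have h1 : (a - 1).toNat = n + 1 := by omega
    have htc : adjoint [a] = List.replicate (n + 1) 2 := by
      show twoChain a = _
      rw [twoChain, h1]
    refine ⟨by rw [htc]; simp, ?_, ?_⟩
    · rw [htc, disc_replicate]; push_cast [hnz]; simp [disc]; omega
    · rw [htc]
      have : (List.replicate (n + 1) (2:ℤ)).dropLast = List.replicate n 2 := by
        rw [List.replicate_succ', List.dropLast_concat]
      rw [this, disc_replicate]
      simp [disc]; omega
  | a :: b :: l, _, h2 => by
    obtain ⟨hne, hd, hdl⟩ := key (b :: l) (by simp) (fun x hx => h2 x (by simp [hx]))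
    obtain ⟨g1, g2, g3⟩ := disc_glue _ hne a (h2 a (by simp))
    have hadj : adjoint (a :: b :: l) = chainGlue (adjoint (b :: l)) (twoChain a) := rfl
    have hdisc : disc (a :: b :: l) = a * disc (b :: l) - disc l := rfl
    have htail : disc ((b :: l) : List ℤ).tail = disc l := rfl
    rw [htail] at hdl
    refine ⟨by rw [hadj]; exact g1, ?_, ?_⟩
    · rw [hadj, g2, hd, hdl, hdisc]; ring
    · rw [hadj, g3, hd, hdl, hdisc]
      show _ = _ - disc (b :: l)
      ring

theorem disc_adjoint (A : List ℤ) (hA : A ≠ []) (h2 : ∀ a ∈ A, 2 ≤ a) :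
    disc (adjoint A) = disc A := by
  exact (key A hA h2).2.1
end

section
/- For every nonempty list A = [a_1,...,a_r] of integers with all a_i ≥ 2, the chain A ++ [1] ++ A* has discriminant zero: d(A ++ [1] ++ A*) = 0. -/
abbrev M4 := ℤ × ℤ × ℤ × ℤ

def mmul (x y : M4) : M4 :=
  (x.1 * y.1 + x.2.1 * y.2.2.1, x.1 * y.2.1 + x.2.1 * y.2.2.2,
   x.2.2.1 * y.1 + x.2.2.2 * y.2.2.1, x.2.2.1 * y.2.1 + x.2.2.2 * y.2.2.2)

def mat : List ℤ → M4
  | [] => (1, 0, 0, 1)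
  | a :: l => mmul (a, -1, 1, 0) (mat l)

lemma mmul_assoc (x y z : M4) : mmul (mmul x y) z = mmul x (mmul y z) := by
  obtain ⟨a, b, c, d⟩ := x
  obtain ⟨e, f, g, h⟩ := y
  obtain ⟨i, j, k, l⟩ := z
  simp only [mmul, Prod.mk.injEq]
  refine ⟨by ring, by ring, by ring, by ring⟩

lemma one_mmul (x : M4) : mmul (1, 0, 0, 1) x = x := by
  obtain ⟨a, b, c, d⟩ := x
  simp [mmul]

lemma mat_append (X Y : List ℤ) : mat (X ++ Y) = mmul (mat X) (mat Y) := by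
  induction X with
  | nil => simp [mat, one_mmul]
  | cons a X ih =>
    rw [List.cons_append]
    show mmul (a, -1, 1, 0) (mat (X ++ Y)) = _
    rw [ih, ← mmul_assoc]
    rfl

lemma mat_spec (L : List ℤ) : (mat L).1 = disc L ∧ (L ≠ [] → (mat L).2.2.1 = disc L.tail) := by
  induction L with
  | nil => simp [mat, disc]
  | cons a L ih =>
    cases L with
    | nil => simp [mat, mmul, disc]
    | cons b l =>
      obtain ⟨ih1, ih2⟩ := ih
      have ih2' := ih2 (by simp)
      simp only [List.tail_cons] at ih2'
      constructor
      · show (mmul (a, -1, 1, 0) (mat (b :: l))).1 = disc (a :: b :: l)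
        simp only [mmul, disc, ih1, ih2']
        ring
      · intro _
        show (mmul (a, -1, 1, 0) (mat (b :: l))).2.2.1 = disc (b :: l)
        simp only [mmul, ih1]
        ring

lemma mat_replicate (n : ℕ) :
    mat (List.replicate n 2) = ((n : ℤ) + 1, -(n : ℤ), (n : ℤ), 1 - (n : ℤ)) := by
  induction n with
  | zero => simp [mat]
  | succ n ih =>
    rw [List.replicate_succ]
    show mmul (2, -1, 1, 0) (mat (List.replicate n 2)) = _
    rw [ih]
    simp only [mmul, Prod.mk.injEq]
    push_cast
    refine ⟨by ring, by ring, by ring, by ring⟩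

lemma mat_twoChain (a : ℤ) (ha : 2 ≤ a) :
    mat (twoChain a) = (a, 1 - a, a - 1, 2 - a) := by
  have hn : ((a - 1).toNat : ℤ) = a - 1 := Int.toNat_of_nonneg (by omega)
  rw [twoChain, mat_replicate, hn]
  refine Prod.ext (by ring) (Prod.ext (by ring) (Prod.ext (by ring) (by ring)))

lemma twoChain_ne_nil (a : ℤ) (ha : 2 ≤ a) : twoChain a ≠ [] := by
  simp only [twoChain, ne_eq, List.replicate_eq_nil_iff]
  omega

lemma chainGlue_ne_nil (C T : List ℤ) : chainGlue C T ≠ [] := by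
  simp [chainGlue]

lemma adjoint_ne_nil (A : List ℤ) (hA : A ≠ []) (h2 : ∀ a ∈ A, 2 ≤ a) : adjoint A ≠ [] := by
  match A with
  | [a] => exact twoChain_ne_nil a (h2 a (by simp))
  | a :: b :: l => exact chainGlue_ne_nil _ _

lemma mat_chainGlue (C T : List ℤ) (hC : C ≠ []) (hT : T ≠ []) :
    mat (chainGlue C T) = mmul (mmul (mat C) (0, 1, -1, 1)) (mat T) := by
  obtain ⟨D, c, rfl⟩ := (List.eq_nil_or_concat C).resolve_left hC
  simp only [List.concat_eq_append]
  cases T with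
  | nil => exact absurd rfl hT
  | cons h T' =>
    have hCG : chainGlue (D ++ [c]) (h :: T') = D ++ (c + h - 1) :: T' := by
      simp [chainGlue, List.dropLast_concat, List.getLastD_concat]
    rw [hCG, mat_append, mat_append]
    show mmul (mat D) (mmul (c + h - 1, -1, 1, 0) (mat T')) =
      mmul (mmul (mmul (mat D) (mat [c])) (0, 1, -1, 1)) (mat (h :: T'))
    have h1 : mat [c] = (c, -1, 1, 0) := by
      show mmul (c, -1, 1, 0) (1, 0, 0, 1) = _
      simp [mmul]
    have h2 : mat (h :: T') = mmul (h, -1, 1, 0) (mat T') := rfl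
    rw [h1, h2, mmul_assoc, mmul_assoc, ← mmul_assoc (0, 1, -1, 1)]
    congr 1
    obtain ⟨p, q, r, s⟩ := mat T'
    simp only [mmul, Prod.mk.injEq]
    refine ⟨by ring, by ring, by ring, by ring⟩

lemma mat_adjoint (A : List ℤ) (hA : A ≠ []) (h2 : ∀ a ∈ A, 2 ≤ a) :
    mat (adjoint A) = ((mat A).1, (mat A).2.2.1 - (mat A).1,
      (mat A).1 + (mat A).2.1, (mat A).2.2.1 + (mat A).2.2.2 - (mat A).1 - (mat A).2.1) := by
  induction A with
  | nil => exact absurd rfl hA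
  | cons a B ih =>
    have ha : 2 ≤ a := h2 a (by simp)
    cases B with
    | nil =>
      show mat (twoChain a) = _
      have hm : mat [a] = (a, -1, 1, 0) := by simp [mat, mmul]
      rw [mat_twoChain a ha, hm]
      norm_num
      omega
    | cons b l =>
      have h2B : ∀ x ∈ b :: l, 2 ≤ x := fun x hx => h2 x (by simp [hx])
      have hBne : (b :: l : List ℤ) ≠ [] := by simp
      show mat (chainGlue (adjoint (b :: l)) (twoChain a)) = _
      rw [mat_chainGlue _ _ (adjoint_ne_nil _ hBne h2B) (twoChain_ne_nil a ha),
        mat_twoChain a ha, ih hBne h2B]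
      have hm : mat (a :: b :: l) = mmul (a, -1, 1, 0) (mat (b :: l)) := rfl
      rw [hm]
      generalize mat (b :: l) = m
      obtain ⟨p, q, r, s⟩ := m
      simp only [mmul, Prod.mk.injEq]
      refine ⟨by ring, by ring, by ring, by ring⟩

theorem disc_append_one_adjoint (A : List ℤ) (hA : A ≠ []) (h2 : ∀ a ∈ A, 2 ≤ a) :
    disc (A ++ 1 :: adjoint A) = 0 := by
  rw [← (mat_spec _).1, mat_append]
  have h1 : mat (1 :: adjoint A) = mmul (1, -1, 1, 0) (mat (adjoint A)) := rfl
  rw [h1, mat_adjoint A hA h2]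
  obtain ⟨p, q, r, s⟩ := mat A
  simp only [mmul]
  ring
end
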